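/- arXiv:0907.2762 — 4 statements merged into one kernel-verified Lean document; each statement's English description precedes it below -/
import Mathlib

section
/- Let Λ be the ring of integers of a number field, m ∈ Λ nonzero, 𝔭 a prime of Λ, and n ≥ 2. For every transvection U = Iₙ + a·E_{i,j} (i ≠ j, a ∈ Λ_𝔭) in GLₙ(Λ_𝔭) there exists U' ∈ GLₙ(Λ) with U' ≡ U mod m·Λ_𝔭 and U' ≡ Iₙ mod m·Λ_𝔮 for all primes 𝔮 ≠ 𝔭. -/
set_option maxHeartbeats 1000000
set_option synthInstance.maxHeartbeats 200000


open IsDedekindDomain IsDedekindDomain.HeightOneSpectrum Multiplicative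

section Aux

variable {Λ : Type*} [CommRing Λ] [IsDedekindDomain Λ]
  {K : Type*} [Field K] [Algebra Λ K] [IsFractionRing Λ K]

private lemma aux_pow_decomp (v : HeightOneSpectrum Λ) {m : Λ} (hm : m ≠ 0) :
    ∃ (E : ℕ) (M : Ideal Λ), ¬ v.asIdeal ∣ M ∧ Ideal.span {m} = v.asIdeal ^ E * M ∧
      v.intValuationDef m = Multiplicative.ofAdd (-(E : ℤ)) := by
  have hspan : Ideal.span {m} ≠ (0 : Ideal Λ) := by
    simpa [Ideal.zero_eq_bot, Ideal.span_singleton_eq_bot] using hm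
  obtain ⟨E, M, hM, heq⟩ := WfDvdMonoid.max_power_factor' hspan
    (fun h => v.isMaximal.ne_top (Ideal.isUnit_iff.mp h))
  refine ⟨E, M, hM, heq, ?_⟩
  have hdvd : v.asIdeal ^ E ∣ Ideal.span {m} := ⟨M, heq⟩
  have h1 : v.intValuationDef m ≤ Multiplicative.ofAdd (-(E : ℤ)) :=
    (v.intValuation_le_pow_iff_dvd m E).mpr hdvd
  have h2 : ¬ (v.intValuationDef m ≤ Multiplicative.ofAdd (-((E + 1 : ℕ) : ℤ))) := by
    intro h
    have hdvd2 := (v.intValuation_le_pow_iff_dvd m (E + 1)).mp h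
    rw [heq, pow_succ] at hdvd2
    have hne : v.asIdeal ^ E ≠ 0 := pow_ne_zero _ (by
      simpa [Ideal.zero_eq_bot] using v.ne_bot)
    rw [mul_dvd_mul_iff_left hne] at hdvd2
    exact hM hdvd2
  obtain ⟨γ, hγ⟩ := WithZero.ne_zero_iff_exists.mp (v.intValuation_ne_zero m hm)
  rw [intValuation_apply] at hγ
  rw [← hγ] at h1 h2 ⊢
  rw [WithZero.coe_le_coe] at h1
  rw [WithZero.coe_le_coe] at h2
  have h1' : γ.toAdd ≤ -(E : ℤ) := by
    rw [← ofAdd_toAdd γ, Multiplicative.ofAdd_le] at h1; exact h1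
  have h2' : ¬ (γ.toAdd ≤ -((E + 1 : ℕ) : ℤ)) := by
    intro h
    exact h2 (by rw [← ofAdd_toAdd γ, Multiplicative.ofAdd_le]; exact h)
  have hEq : γ.toAdd = -(E : ℤ) := by push_cast at h2'; omega
  rw [← hEq, ofAdd_toAdd]

private lemma aux_val_coe (v : HeightOneSpectrum Λ) (x : Λ) :
    Valued.v (algebraMap Λ (v.adicCompletion K) x) = v.intValuationDef x := by
  rw [show algebraMap Λ (v.adicCompletion K) x
      = ((algebraMap Λ K x : K) : v.adicCompletion K) from rfl,
    valuedAdicCompletion_eq_valuation', valuation_of_algebraMap]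
  exact intValuation_apply v

private lemma aux_inv_mod (v : HeightOneSpectrum Λ) {d : Λ} (hd : d ∉ v.asIdeal) (E : ℕ)
    (c₀ : Λ) : ∃ c : Λ, c₀ - c * d ∈ v.asIdeal ^ E := by
  have hsup : v.asIdeal ⊔ Ideal.span {d} = ⊤ := by
    by_contra h
    have heq : v.asIdeal = v.asIdeal ⊔ Ideal.span {d} := v.isMaximal.eq_of_le h le_sup_left
    have hmem : d ∈ v.asIdeal ⊔ Ideal.span {d} :=
      Submodule.mem_sup_right (Ideal.mem_span_singleton_self d)
    rw [← heq] at hmem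
    exact hd hmem
  have hcop : IsCoprime (v.asIdeal ^ E) (Ideal.span {d}) :=
    (Ideal.isCoprime_iff_sup_eq.mpr hsup).pow_left
  have hctop : c₀ ∈ v.asIdeal ^ E ⊔ Ideal.span {d} := by rw [hcop.sup_eq]; trivial
  obtain ⟨x, hx, y, hy, hxy⟩ := Submodule.mem_sup.mp hctop
  obtain ⟨c, hc⟩ := Ideal.mem_span_singleton'.mp hy
  refine ⟨c, ?_⟩
  have : c₀ - c * d = x := by rw [← hxy, hc]; ring
  rw [this]
  exact hx

private lemma aux_dense (v : HeightOneSpectrum Λ) {k : K} (hk : v.valuation K k ≤ 1) (E : ℕ) :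
    ∃ c : Λ, v.valuation K (k - algebraMap Λ K c) ≤ Multiplicative.ofAdd (-(E : ℤ)) := by
  obtain ⟨⟨r, s⟩, rfl⟩ := IsLocalization.mk'_surjective (nonZeroDivisors Λ) k
  rw [valuation_of_mk'] at hk
  have hs0 : (s : Λ) ≠ 0 := nonZeroDivisors.coe_ne_zero s
  have hsv : v.intValuation (s : Λ) ≠ 0 := v.intValuation_ne_zero _ hs0
  have hle : v.intValuationDef r ≤ v.intValuationDef (s : Λ) := by
    have h2 := mul_le_mul_left hk (v.intValuation (s : Λ))
    rwa [div_mul_cancel₀ _ hsv, one_mul, intValuation_apply, intValuation_apply] at h2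
  have hspan : Ideal.span {(s : Λ)} ≠ (0 : Ideal Λ) := by
    simpa [Ideal.zero_eq_bot, Ideal.span_singleton_eq_bot] using hs0
  obtain ⟨t, M, hM, heq⟩ := WfDvdMonoid.max_power_factor' hspan
    (fun h => v.isMaximal.ne_top (Ideal.isUnit_iff.mp h))
  have hts : v.intValuationDef (s : Λ) ≤ Multiplicative.ofAdd (-(t : ℤ)) :=
    (v.intValuation_le_pow_iff_dvd _ t).mpr ⟨M, heq⟩
  have htr : v.asIdeal ^ t ∣ Ideal.span {r} :=
    (v.intValuation_le_pow_iff_dvd r t).mp (le_trans hle hts)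
  have hMle : ¬ M ≤ v.asIdeal := fun h => hM (Ideal.dvd_iff_le.mpr h)
  obtain ⟨d, hdM, hdv⟩ := SetLike.not_le_iff_exists.mp hMle
  have hd0 : d ≠ 0 := fun h => hdv (h ▸ v.asIdeal.zero_mem)
  have hmem : r * d ∈ Ideal.span {(s : Λ)} := by
    have hdvd : Ideal.span {(s : Λ)} ∣ Ideal.span {r * d} := by
      rw [heq, ← Ideal.span_singleton_mul_span_singleton]
      exact mul_dvd_mul htr (Ideal.dvd_span_singleton.mpr hdM)
    simpa [Ideal.dvd_span_singleton] using hdvd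
  obtain ⟨c₀, hc₀⟩ := Ideal.mem_span_singleton'.mp hmem
  obtain ⟨c, hc⟩ := aux_inv_mod v hdv E c₀
  refine ⟨c, ?_⟩
  have hinj := IsFractionRing.injective Λ K
  have hdK : algebraMap Λ K d ≠ 0 := by
    simpa [map_zero] using hinj.ne hd0
  have hsK : algebraMap Λ K (s : Λ) ≠ 0 := by
    simpa [map_zero] using hinj.ne hs0
  have h1 : algebraMap Λ K r / algebraMap Λ K (s : Λ)
      = algebraMap Λ K c₀ / algebraMap Λ K d := by
    rw [div_eq_div_iff hsK hdK, ← map_mul, ← map_mul]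
    exact congrArg _ hc₀.symm
  have hkey : IsLocalization.mk' K r s - algebraMap Λ K c
      = algebraMap Λ K (c₀ - c * d) / algebraMap Λ K d := by
    rw [IsFractionRing.mk'_eq_div, h1, map_sub, sub_div, map_mul, mul_div_assoc,
      div_self hdK, mul_one]
  have hd1 : v.intValuationDef d = 1 := by
    refine le_antisymm (v.intValuation_le_one d) ?_
    by_contra hlt
    push_neg at hlt
    exact hdv (by
      simpa [Ideal.dvd_span_singleton] using (v.intValuation_lt_one_iff_dvd d).mp hlt)
  rw [hkey, map_div₀, valuation_of_algebraMap, valuation_of_algebraMap,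
    intValuation_apply, intValuation_apply, hd1, div_one]
  exact (v.intValuation_le_pow_iff_dvd _ E).mpr (Ideal.dvd_span_singleton.mpr hc)

end Aux

/-- Approximation of transvections: let `Λ` be a Dedekind domain (e.g. the
ring of integers of a number field), `m ≠ 0`, `𝔭` a prime, `n ≥ 2`.  For every
transvection `U = Iₙ + a • E i j` (`i ≠ j`, `a ∈ Λ_𝔭`) over the completion
`Λ_𝔭` there is `U' ∈ GLₙ(Λ)` with `U' ≡ U mod m·Λ_𝔭` (entrywise) and
`U' ≡ Iₙ mod m·Λ_𝔮` for all primes `𝔮 ≠ 𝔭`.  Congruence modulo `m` is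
expressed through the valuations of the completions. -/
theorem stmt5 (Λ : Type*) [CommRing Λ] [IsDedekindDomain Λ]
    (K : Type*) [Field K] [Algebra Λ K] [IsFractionRing Λ K]
    (m : Λ) (hm : m ≠ 0) (v : HeightOneSpectrum Λ)
    (n : ℕ) (hn : 2 ≤ n) (i j : Fin n) (hij : i ≠ j)
    (a : v.adicCompletion K) (ha : a ∈ v.adicCompletionIntegers K) :
    ∃ U' : (Matrix (Fin n) (Fin n) Λ)ˣ,
      (∀ k l : Fin n,
        Valued.v (algebraMap Λ (v.adicCompletion K) (U'.val k l)
            - (1 + a • Matrix.single i j (1 : v.adicCompletion K)) k l)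
          ≤ Valued.v (algebraMap Λ (v.adicCompletion K) m)) ∧
      ∀ w : HeightOneSpectrum Λ, w ≠ v → ∀ k l : Fin n,
        Valued.v (algebraMap Λ (w.adicCompletion K) (U'.val k l)
            - (1 : Matrix (Fin n) (Fin n) (w.adicCompletion K)) k l)
          ≤ Valued.v (algebraMap Λ (w.adicCompletion K) m) := by
  classical
  letI : Valued K (WithZero (Multiplicative ℤ)) := v.adicValued
  obtain ⟨E, M, hMv, hmEq, hval⟩ := aux_pow_decomp v hm
  have hm0 : v.intValuationDef m ≠ 0 := v.intValuation_ne_zero m hm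
  -- density: find `k : K` close to `a`
  set γ : (WithZero (Multiplicative ℤ))ˣ := Units.mk0 _ hm0 with hγdef
  have hU : {y : v.adicCompletion K | Valued.v (y - a) < (γ : (WithZero (Multiplicative ℤ)))} ∈ nhds a :=
    Valued.mem_nhds.mpr ⟨Units.mk0 (Valued.v.restrict (algebraMap Λ (v.adicCompletion K) m))
      ((Valuation.ne_zero_iff _).mpr (fun h0 => hm0 (by rw [← aux_val_coe (K := K), h0, map_zero]))),
      fun y hy => by
        have h' := (Valuation.restrict_lt_iff _).mp hy
        rwa [aux_val_coe] at h'⟩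
  have hdense : a ∈ closure (Set.range ((↑) : K → v.adicCompletion K)) :=
    (denseRange_algebraMap (K := K) (v := v)) a
  obtain ⟨y, hyU, hyR⟩ := (mem_closure_iff_nhds.mp hdense _ hU)
  obtain ⟨k, rfl⟩ := hyR
  have hka : Valued.v ((k : v.adicCompletion K) - a) ≤ v.intValuationDef m := le_of_lt hyU
  have hk1 : v.valuation K k ≤ 1 := by
    have hcalc : Valued.v ((k : v.adicCompletion K)) ≤ 1 := by
      calc Valued.v ((k : v.adicCompletion K))
          = Valued.v (((k : v.adicCompletion K) - a) + a) := by rw [sub_add_cancel]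
        _ ≤ max (Valued.v ((k : v.adicCompletion K) - a)) (Valued.v a) :=
            Valuation.map_add _ _ _
        _ ≤ 1 := max_le (le_trans hka (v.intValuation_le_one m)) ha
    rwa [valuedAdicCompletion_eq_valuation'] at hcalc
  obtain ⟨c, hc⟩ := aux_dense v hk1 E
  -- CRT : find `b`
  have hMle : ¬ M ≤ v.asIdeal := fun h => hMv (Ideal.dvd_iff_le.mpr h)
  have hsup : v.asIdeal ⊔ M = ⊤ := by
    by_contra h
    exact hMle (by rw [v.isMaximal.eq_of_le h le_sup_left]; exact le_sup_right)
  have hcop : IsCoprime (v.asIdeal ^ E) M := (Ideal.isCoprime_iff_sup_eq.mpr hsup).pow_left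
  have hctop : c ∈ v.asIdeal ^ E ⊔ M := by rw [hcop.sup_eq]; trivial
  obtain ⟨x, hx, b, hb, hxb⟩ := Submodule.mem_sup.mp hctop
  have hbc : b - c ∈ v.asIdeal ^ E := by
    have hxeq : b - c = -x := by rw [← hxb]; ring
    rw [hxeq]; exact neg_mem hx
  -- the unit
  set X : Matrix (Fin n) (Fin n) Λ := Matrix.single i j b with hX
  have hXX : X * X = 0 := Matrix.single_mul_single_of_ne b i j i (Ne.symm hij) b
  have hmul1 : (1 + X) * (1 - X) = 1 := by
    have h : (1 + X) * (1 - X) = 1 - X * X := by noncomm_ring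
    rw [h, hXX, sub_zero]
  have hmul2 : (1 - X) * (1 + X) = 1 := by
    have h : (1 - X) * (1 + X) = 1 - X * X := by noncomm_ring
    rw [h, hXX, sub_zero]
  refine ⟨⟨1 + X, 1 - X, hmul1, hmul2⟩, ?_, ?_⟩
  · -- condition at v
    have hba : Valued.v (algebraMap Λ (v.adicCompletion K) b - a) ≤ v.intValuationDef m := by
      have e : algebraMap Λ (v.adicCompletion K) b - a
          = (algebraMap Λ (v.adicCompletion K) (b - c))
            + (((algebraMap Λ K c - k : K) : v.adicCompletion K))
            + ((k : v.adicCompletion K) - a) := by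
        have hcs : ∀ x y : K, ((x - y : K) : v.adicCompletion K) = x - y :=
          fun x y => map_sub (algebraMap K (v.adicCompletion K)) x y
        rw [map_sub, hcs]
        have hcc : ((algebraMap Λ K c : K) : v.adicCompletion K)
            = algebraMap Λ (v.adicCompletion K) c := rfl
        rw [hcc]; ring
      rw [e]
      refine le_trans (Valuation.map_add _ _ _) (max_le (le_trans (Valuation.map_add _ _ _)
        (max_le ?_ ?_)) hka)
      · rw [aux_val_coe, hval]
        exact (v.intValuation_le_pow_iff_dvd _ E).mpr (Ideal.dvd_span_singleton.mpr hbc)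
      · rw [valuedAdicCompletion_eq_valuation', Valuation.map_sub_swap, hval]
        exact hc
    intro k' l'
    rw [aux_val_coe]
    simp only [Units.val_mk]
    have hLHS : (1 + X) k' l'
        = (if k' = l' then (1 : Λ) else 0) + (if i = k' ∧ j = l' then b else 0) := by
      simp [hX, Matrix.add_apply, Matrix.one_apply, Matrix.single]
    have hRHS : (1 + a • Matrix.single i j (1 : v.adicCompletion K)) k' l'
        = (if k' = l' then (1 : v.adicCompletion K) else 0)
          + (if i = k' ∧ j = l' then a else 0) := by
      simp [Matrix.add_apply, Matrix.one_apply, Matrix.single, smul_ite]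
    by_cases hijkl : i = k' ∧ j = l'
    · obtain ⟨rfl, rfl⟩ := hijkl
      rw [hLHS, hRHS, if_neg hij, if_pos (show i = i ∧ j = j from ⟨rfl, rfl⟩)]
      simpa [map_add, hij] using hba
    · rw [hLHS, hRHS, if_neg hijkl, if_neg hijkl]
      by_cases hkl : k' = l'
      · rw [if_pos hkl, if_pos hkl]
        simp
      · rw [if_neg hkl, if_neg hkl]
        simp
  · -- condition at other primes
    intro w hwv k' l'
    rw [aux_val_coe]
    simp only [Units.val_mk]
    have hbw : w.intValuationDef b ≤ w.intValuationDef m := by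
      obtain ⟨Ew, Mw, hMw, hmEqw, hvalw⟩ := aux_pow_decomp w hm
      rw [hvalw]
      refine (w.intValuation_le_pow_iff_dvd b Ew).mpr ?_
      have h1 : w.asIdeal ^ Ew ∣ v.asIdeal ^ E * M := by rw [← hmEq]; exact ⟨Mw, hmEqw⟩
      have hnd : ¬ w.asIdeal ∣ v.asIdeal ^ E := by
        intro h
        have h2 : w.asIdeal ∣ v.asIdeal := w.prime.dvd_of_dvd_pow h
        have h3 : v.asIdeal ≤ w.asIdeal := Ideal.le_of_dvd h2
        have h4 : v.asIdeal = w.asIdeal := v.isMaximal.eq_of_le w.isPrime.ne_top h3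
        exact hwv (HeightOneSpectrum.ext h4.symm)
      have h5 : w.asIdeal ^ Ew ∣ M := w.prime.pow_dvd_of_dvd_mul_left Ew hnd h1
      exact dvd_trans h5 (Ideal.dvd_span_singleton.mpr hb)
    have hLHS : (1 + X) k' l'
        = (if k' = l' then (1 : Λ) else 0) + (if i = k' ∧ j = l' then b else 0) := by
      simp [hX, Matrix.add_apply, Matrix.one_apply, Matrix.single]
    rw [hLHS, Matrix.one_apply]
    by_cases hijkl : i = k' ∧ j = l'
    · obtain ⟨rfl, rfl⟩ := hijkl
      rw [if_neg hij, if_pos (show i = i ∧ j = j from ⟨rfl, rfl⟩)]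
      simpa [map_add, hij, aux_val_coe] using hbw
    · rw [if_neg hijkl]
      by_cases hkl : k' = l'
      · rw [if_pos hkl, if_pos hkl]
        simp
      · rw [if_neg hkl, if_neg hkl]
        simp
end

section
/- Let Λ be the ring of integers of a number field. Given nonzero integral ideals e₁ ∣ e₂ ∣ … ∣ eₙ of Λ, there exists a matrix M ∈ Matₙ(Λ) invertible over the field of fractions whose k-th determinantal divisor equals e₁e₂⋯e_k for every k, if and only if the product e₁e₂⋯eₙ is a principal ideal. -/
/-- The `k`-th determinantal divisor of `M`: the ideal generated by all
`k × k` minors of `M`. -/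
def detDiv {Λ : Type*} [CommRing Λ] {n : ℕ} (k : ℕ)
    (M : Matrix (Fin n) (Fin n) Λ) : Ideal Λ :=
  Ideal.span { d | ∃ f g : Fin k → Fin n,
    Function.Injective f ∧ Function.Injective g ∧ d = (M.submatrix f g).det }

open NumberField

namespace Stmt7Aux

open Function Matrix

set_option linter.unusedSectionVars false
set_option maxHeartbeats 1000000

section Helpers

variable {R : Type*} [CommRing R]

lemma ideal_prod_mono {ι : Type*} (s : Finset ι) (f g : ι → Ideal R)
    (h : ∀ i ∈ s, f i ≤ g i) : ∏ i ∈ s, f i ≤ ∏ i ∈ s, g i := by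
  classical
  induction s using Finset.induction_on with
  | empty => simp
  | insert a s ha ih =>
    rw [Finset.prod_insert ha, Finset.prod_insert ha]
    exact Ideal.mul_mono (h a (Finset.mem_insert_self a s))
      (ih fun i hi => h i (Finset.mem_insert_of_mem hi))

lemma ideal_prod_le {ι : Type*} (s : Finset ι) (e : ι → Ideal R) (J : Ideal R)
    (h : ∀ x : ι → R, (∀ i ∈ s, x i ∈ e i) → (∏ i ∈ s, x i) ∈ J) :
    ∏ i ∈ s, e i ≤ J := by
  classical
  induction s using Finset.induction_on generalizing J with
  | empty =>
    have h1 : (1 : R) ∈ J := by simpa using h (fun _ => 1) (by simp)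
    rw [Finset.prod_empty, Ideal.one_eq_top, (Ideal.eq_top_iff_one J).2 h1]
  | insert a s ha ih =>
    rw [Finset.prod_insert ha]
    rw [Ideal.mul_le]
    intro r hr z hz
    have := ih (Submodule.comap (LinearMap.mul R R r) J) ?_
    · simpa using this hz
    · intro x hx
      simp only [Submodule.mem_comap, LinearMap.mul_apply_apply]
      have := h (Function.update x a r) ?_
      · rwa [Finset.prod_insert ha, Function.update_self,
          Finset.prod_congr rfl
            (fun i hi => Function.update_of_ne (fun hia => ha (by rw [← hia]; exact hi)) r x)] at this
      · intro i hi
        rcases Finset.mem_insert.1 hi with rfl | hi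
        · rwa [Function.update_self]
        · rw [Function.update_of_ne (fun hia => ha (by rw [← hia]; exact hi))]
          exact hx i hi

lemma iSup_fin_succ {α : Type*} [CompleteLattice α] {k : ℕ} (f : Fin (k+1) → α) :
    (⨆ i, f i) = f 0 ⊔ ⨆ i : Fin k, f i.succ := by
  apply le_antisymm
  · refine iSup_le (fun i => Fin.cases le_sup_left
      (fun j => le_sup_of_le_right (le_iSup (fun i : Fin k => f i.succ) j)) i)
  · exact sup_le (le_iSup f 0) (iSup_le fun j => le_iSup f j.succ)

lemma sm_le {m : ℕ} {f : Fin m → ℕ} (hf : StrictMono f) :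
    ∀ j (hj : j < m), j ≤ f ⟨j, hj⟩ := by
  intro j
  induction j with
  | zero => intro hj; exact Nat.zero_le _
  | succ j ih =>
    intro hj
    have hj' : j < m := Nat.lt_of_succ_lt hj
    have h1 : f ⟨j, hj'⟩ < f ⟨j+1, hj⟩ := hf (by simp [Fin.lt_def])
    exact Nat.succ_le_of_lt (lt_of_le_of_lt (ih hj') h1)

/-- Cauchy–Binet style membership: the determinant of `A * B` lies in any ideal containing
all the maximal minors of `A`. -/
lemma det_mul_mem {k n : ℕ}
    (A : Matrix (Fin k) (Fin n) R) (B : Matrix (Fin n) (Fin k) R) (J : Ideal R)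
    (h : ∀ r : Fin k → Fin n, (A.submatrix id r).det ∈ J) :
    (A * B).det ∈ J := by
  rw [← Matrix.det_transpose, Matrix.transpose_mul]
  have hrow : Aᵀ.transpose = A := Matrix.transpose_transpose A
  have hrw : Bᵀ * Aᵀ = Matrix.of (fun j => ∑ t : Fin n, B t j • Aᵀ t) := by
    ext j i
    simp [Matrix.mul_apply, mul_comm]
  rw [hrw]
  have expand : (Matrix.of (fun j => ∑ t : Fin n, B t j • Aᵀ t)).det
      = ∑ r : Fin k → Fin n, (∏ j, B (r j) j) • (Matrix.of (fun j => Aᵀ (r j))).det := by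
    show (Matrix.detRowAlternating (R := R) (n := Fin k)).toMultilinearMap
        (fun j => ∑ t : Fin n, B t j • Aᵀ t) = _
    rw [Matrix.detRowAlternating.toMultilinearMap.map_sum (g := fun j t => B t j • Aᵀ t)]
    refine Finset.sum_congr rfl fun r _ => ?_
    exact Matrix.detRowAlternating.toMultilinearMap.map_smul_univ
      (fun j => B (r j) j) (fun j => Aᵀ (r j))
  rw [expand]
  apply Ideal.sum_mem
  intro r _
  apply Ideal.mul_mem_left
  have hres : (Matrix.of (fun j => Aᵀ (r j))).det = (A.submatrix id r).det := by
    rw [← Matrix.det_transpose (A.submatrix id r), Matrix.transpose_submatrix]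
    rfl
  rw [hres]
  exact h r

/-- The top determinantal divisor is the ideal generated by the determinant. -/
lemma detDiv_top {n : ℕ} (M : Matrix (Fin n) (Fin n) R) :
    detDiv n M = Ideal.span {M.det} := by
  apply le_antisymm
  · rw [detDiv, Ideal.span_le]
    rintro d ⟨f, g, hf, hg, rfl⟩
    have hfb : Function.Bijective f := (Finite.injective_iff_bijective).1 hf
    have hgb : Function.Bijective g := (Finite.injective_iff_bijective).1 hg
    set ef := Equiv.ofBijective f hfb with hef
    set eg := Equiv.ofBijective g hgb with heg
    set σ : Equiv.Perm (Fin n) := ef.symm.trans eg with hσ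
    have h1 : M.submatrix f g = (M.submatrix id ⇑σ).submatrix ⇑ef ⇑ef := by
      rw [Matrix.submatrix_submatrix]
      ext i j
      simp [hσ, Matrix.submatrix_apply, hef, heg, Equiv.ofBijective_apply]
    rw [SetLike.mem_coe, h1, Matrix.det_submatrix_equiv_self, Matrix.det_permute',
      Ideal.mem_span_singleton]
    exact Dvd.intro_left _ rfl
  · rw [Ideal.span_le, Set.singleton_subset_iff]
    exact Ideal.subset_span ⟨id, id, injective_id, injective_id,
      by rw [Matrix.submatrix_id_id]⟩

end Helpers

section DD

variable {R : Type*} [CommRing R] [IsDomain R] [IsDedekindDomain R]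

/-- Approximation lemma: in a Dedekind domain, given nonzero ideals `b` and `s`, there
is a nonzero `y ∈ b` whose cofactor ideal `t = (y)/b` is coprime to `s`. -/
lemma exists_coprime_cofactor (b s : Ideal R) (hb : b ≠ 0) (hs : s ≠ 0) :
    ∃ y : R, y ≠ 0 ∧ ∃ t : Ideal R, Ideal.span {y} = b * t ∧ s ⊔ t = ⊤ := by
  classical
  by_cases hstop : s = ⊤
  · obtain ⟨y, hyb, hy0⟩ := Submodule.exists_mem_ne_zero_of_ne_bot hb
    have hdvd : b ∣ Ideal.span {y} := Ideal.dvd_iff_le.2 (by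
      rw [Ideal.span_singleton_le_iff_mem]; exact hyb)
    obtain ⟨t, ht⟩ := hdvd
    exact ⟨y, hy0, t, ht, by rw [hstop, top_sup_eq]⟩
  · set P := (UniqueFactorizationMonoid.normalizedFactors s).toFinset with hP
    have hPmem : ∀ p ∈ P, Prime p ∧ s ≤ p := by
      intro p hp
      rw [hP, Multiset.mem_toFinset] at hp
      exact ⟨UniqueFactorizationMonoid.prime_of_normalized_factor p hp,
        ((Ideal.mem_normalizedFactors_iff hs).1 hp).2⟩
    have hmemP : ∀ p : Ideal R, p.IsPrime → s ≤ p → p ∈ P := by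
      intro p hpp hsp
      rw [hP, Multiset.mem_toFinset]
      exact (Ideal.mem_normalizedFactors_iff hs).2 ⟨hpp, hsp⟩
    obtain ⟨m, hm, hsm⟩ := Ideal.exists_le_maximal s hstop
    have hmP : m ∈ P := hmemP m hm.isPrime hsm
    have hchoice : ∀ p ∈ P, ∃ yp : R, yp ∈ b * ∏ q ∈ P.erase p, q ∧ yp ∉ b * p := by
      intro p hp
      have hnle : ¬ (b * ∏ q ∈ P.erase p, q ≤ b * p) := by
        intro hle
        have hdvd : b * p ∣ b * ∏ q ∈ P.erase p, q := Ideal.dvd_iff_le.2 hle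
        rw [mul_dvd_mul_iff_left hb] at hdvd
        obtain ⟨q, hq, hpq⟩ := (hPmem p hp).1.exists_mem_finset_dvd hdvd
        have hqprime := (hPmem q (Finset.mem_of_mem_erase hq)).1
        obtain ⟨r, hr⟩ := hpq
        rcases hqprime.irreducible.isUnit_or_isUnit hr with hu | hu
        · exact (hPmem p hp).1.not_unit hu
        · rw [Ideal.isUnit_iff] at hu
          rw [hu, Ideal.mul_top] at hr
          exact (Finset.ne_of_mem_erase hq) (hr ▸ rfl)
      exact Set.not_subset.1 hnle
    choose yp hyp1 hyp2 using hchoice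
    set y := ∑ p ∈ P.attach, yp p.1 p.2 with hy
    have hyb : y ∈ b := by
      apply Submodule.sum_mem
      intro p _
      exact Ideal.mul_le_left (hyp1 p.1 p.2)
    have hynot : ∀ p (hp : p ∈ P), y ∉ b * p := by
      intro p hp hyin
      have hrest : ∑ q ∈ P.attach.erase ⟨p, hp⟩, yp q.1 q.2 ∈ b * p := by
        apply Submodule.sum_mem
        intro q hq
        have hqne : q.1 ≠ p := by
          intro h
          apply Finset.ne_of_mem_erase hq
          exact Subtype.ext h
        have hpin : p ∈ P.erase q.1 := Finset.mem_erase.2 ⟨Ne.symm hqne, hp⟩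
        have hle : b * ∏ r ∈ P.erase q.1, r ≤ b * p :=
          Ideal.mul_mono le_rfl (Ideal.le_of_dvd (Finset.dvd_prod_of_mem _ hpin))
        exact hle (hyp1 q.1 q.2)
      have hsum : y = yp p hp + ∑ q ∈ P.attach.erase ⟨p, hp⟩, yp q.1 q.2 := by
        rw [hy, ← Finset.add_sum_erase _ _ (Finset.mem_attach P ⟨p, hp⟩)]
      have : yp p hp ∈ b * p := by
        have := Submodule.sub_mem _ hyin hrest
        rwa [hsum, add_sub_cancel_right] at this
      exact hyp2 p hp this
    have hy0 : y ≠ 0 := fun h0 => hynot m hmP (by rw [h0]; exact Submodule.zero_mem _)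
    have hdvd : b ∣ Ideal.span {y} := Ideal.dvd_iff_le.2 (by
      rw [Ideal.span_singleton_le_iff_mem]; exact hyb)
    obtain ⟨t, ht⟩ := hdvd
    refine ⟨y, hy0, t, ht, ?_⟩
    by_contra hne
    obtain ⟨m', hm', hstm⟩ := Ideal.exists_le_maximal _ hne
    have hsm' : s ≤ m' := le_trans le_sup_left hstm
    have htm' : t ≤ m' := le_trans le_sup_right hstm
    have hm'P : m' ∈ P := hmemP m' hm'.isPrime hsm'
    apply hynot m' hm'P
    have hbt : b * t ≤ b * m' := Ideal.mul_mono le_rfl htm'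
    apply hbt
    rw [← ht]
    exact Ideal.subset_span rfl

variable {F : Type*} [Field F] [Algebra R F] [IsFractionRing R F]
variable {V : Type*} [AddCommGroup V] [Module F V] [Module R V] [IsScalarTower R F V]

/-- The submodule `c • v` of `V`. -/
def IdS (c : Ideal R) (v : V) : Submodule R V :=
  Submodule.map (LinearMap.toSpanSingleton R V v) c

lemma mem_IdS {c : Ideal R} {v z : V} : z ∈ IdS c v ↔ ∃ a ∈ c, a • v = z := by
  simp only [IdS, Submodule.mem_map, LinearMap.toSpanSingleton_apply]

lemma pair_combine (c₀ c₁ : Ideal R) (h₀ : c₀ ≠ 0) (h₁ : c₁ ≠ 0) (v₀ v₁ : V) :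
    ∃ (u : V) (α β : F), ¬(α = 0 ∧ β = 0) ∧
      IdS c₀ v₀ ⊔ IdS c₁ v₁ =
        Submodule.span R {u} ⊔ IdS (c₀ * c₁) (α • v₀ + β • v₁) := by
  obtain ⟨x, hxc, hx0⟩ := Submodule.exists_mem_ne_zero_of_ne_bot h₀
  obtain ⟨sId, hsId⟩ : c₀ ∣ Ideal.span {x} :=
    Ideal.dvd_iff_le.2 ((Ideal.span_singleton_le_iff_mem _).2 hxc)
  have hs0 : sId ≠ 0 := by
    rintro rfl
    rw [mul_zero] at hsId
    exact hx0 (by simpa [Ideal.span_singleton_eq_bot] using hsId)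
  obtain ⟨y, hy0, t, hyt, hcop⟩ := exists_coprime_cofactor c₁ sId h₁ hs0
  have hyc : y ∈ c₁ := by
    have hle : Ideal.span {y} ≤ c₁ := by rw [hyt]; exact Ideal.mul_le_left
    exact hle (Ideal.subset_span rfl)
  obtain ⟨σ, hσ, τ, hτ, hστ⟩ := Submodule.mem_sup.1
    (show (1:R) ∈ sId ⊔ t by rw [hcop]; exact Submodule.mem_top)
  have hx' : algebraMap R F x ≠ 0 := by
    simpa using (IsFractionRing.injective R F).ne hx0
  have hy' : algebraMap R F y ≠ 0 := by
    simpa using (IsFractionRing.injective R F).ne hy0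
  refine ⟨x • v₀ + y • v₁, -(algebraMap R F τ / algebraMap R F y),
    algebraMap R F σ / algebraMap R F x, ?_, ?_⟩
  · rintro ⟨ha, hb⟩
    rw [neg_eq_zero, div_eq_zero_iff] at ha
    rw [div_eq_zero_iff] at hb
    have hτ0 : τ = 0 := (IsFractionRing.injective R F)
      (by simpa using ha.resolve_right hy')
    have hσ0 : σ = 0 := (IsFractionRing.injective R F)
      (by simpa using hb.resolve_right hx')
    rw [hτ0, hσ0] at hστ
    simpa using hστ
  · set u := x • v₀ + y • v₁ with hu
    set α := -(algebraMap R F τ / algebraMap R F y) with hα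
    set β := algebraMap R F σ / algebraMap R F x with hβ
    set w := α • v₀ + β • v₁ with hw
    have h1 : algebraMap R F σ + algebraMap R F τ = 1 := by rw [← _root_.map_add, hστ, _root_.map_one]
    apply le_antisymm
    · apply sup_le
      · intro z hz
        obtain ⟨p, hp, rfl⟩ := mem_IdS.1 hz
        obtain ⟨r, hr⟩ := Ideal.mem_span_singleton'.1
          (show p * σ ∈ Ideal.span {x} by rw [hsId]; exact Ideal.mul_mem_mul hp hσ)
        have hr' : algebraMap R F r * algebraMap R F x
            = algebraMap R F p * algebraMap R F σ := by rw [← _root_.map_mul, ← _root_.map_mul, hr]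
        have key : r • u + (-(p*y)) • w = p • v₀ := by
          rw [hu, hw, hα, hβ]
          match_scalars
          · field_simp
            linear_combination hr' + (algebraMap R F p) * h1
          · field_simp
            linear_combination (algebraMap R F y) * hr'
        rw [← key]
        exact Submodule.add_mem _
          (Submodule.mem_sup_left (Submodule.smul_mem _ r (Submodule.mem_span_singleton_self u)))
          (Submodule.mem_sup_right (mem_IdS.2
            ⟨-(p*y), Submodule.neg_mem _ (Ideal.mul_mem_mul hp hyc), rfl⟩))
      · intro z hz
        obtain ⟨q, hq, rfl⟩ := mem_IdS.1 hz
        obtain ⟨r, hr⟩ := Ideal.mem_span_singleton'.1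
          (show q * τ ∈ Ideal.span {y} by
            rw [hyt]; exact Ideal.mul_mem_mul hq hτ)
        have hr' : algebraMap R F r * algebraMap R F y
            = algebraMap R F q * algebraMap R F τ := by rw [← _root_.map_mul, ← _root_.map_mul, hr]
        have key : r • u + (x*q) • w = q • v₁ := by
          rw [hu, hw, hα, hβ]
          match_scalars
          · field_simp
            linear_combination (algebraMap R F x) * hr'
          · field_simp
            linear_combination hr' + (algebraMap R F q) * h1
        rw [← key]
        exact Submodule.add_mem _
          (Submodule.mem_sup_left (Submodule.smul_mem _ r (Submodule.mem_span_singleton_self u)))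
          (Submodule.mem_sup_right (mem_IdS.2
            ⟨x*q, Ideal.mul_mem_mul hxc hq, rfl⟩))
    · apply sup_le
      · rw [Submodule.span_le, Set.singleton_subset_iff]
        exact Submodule.add_mem _
          (Submodule.mem_sup_left (mem_IdS.2 ⟨x, hxc, rfl⟩))
          (Submodule.mem_sup_right (mem_IdS.2 ⟨y, hyc, rfl⟩))
      · intro z hz
        obtain ⟨a, ha, rfl⟩ := mem_IdS.1 hz
        obtain ⟨p, hp, hpeq⟩ := Ideal.mem_span_singleton_mul.1
          (show a * τ ∈ Ideal.span {y} * c₀ by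
            have h2 : a * τ ∈ (c₀ * c₁) * t := Ideal.mul_mem_mul ha hτ
            have h3 : (c₀ * c₁) * t = Ideal.span {y} * c₀ := by rw [hyt]; ring
            rwa [h3] at h2)
        obtain ⟨q, hq, hqeq⟩ := Ideal.mem_span_singleton_mul.1
          (show a * σ ∈ Ideal.span {x} * c₁ by
            have h2 : a * σ ∈ (c₀ * c₁) * sId := Ideal.mul_mem_mul ha hσ
            have h3 : (c₀ * c₁) * sId = Ideal.span {x} * c₁ := by rw [hsId]; ring
            rwa [h3] at h2)
        have hp' : algebraMap R F a * algebraMap R F τ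
            = algebraMap R F y * algebraMap R F p := by rw [← _root_.map_mul, ← _root_.map_mul, hpeq]
        have hq' : algebraMap R F a * algebraMap R F σ
            = algebraMap R F x * algebraMap R F q := by rw [← _root_.map_mul, ← _root_.map_mul, hqeq]
        have key : a • w = (-p) • v₀ + q • v₁ := by
          rw [hw, hα, hβ]
          match_scalars
          · field_simp
            linear_combination -hp'
          · field_simp
            linear_combination hq'
        rw [key]
        exact Submodule.add_mem _
          (Submodule.mem_sup_left (mem_IdS.2 ⟨-p, Submodule.neg_mem _ hp, rfl⟩))
          (Submodule.mem_sup_right (mem_IdS.2 ⟨q, hq, rfl⟩))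

/-- A finite direct sum of ideals with principal product, in general position inside a
vector space over the fraction field, is spanned by `m` vectors. -/
lemma free_of_principal_prod (m : ℕ) :
    ∀ (c : Fin m → Ideal R), (∀ i, c i ≠ 0) → (∏ i, c i).IsPrincipal →
    ∀ v : Fin m → V, LinearIndependent F v →
    ∃ w : Fin m → V, (⨆ i, IdS (c i) (v i)) = Submodule.span R (Set.range w) := by
  induction m with
  | zero =>
    intro c _ _ v _
    refine ⟨Fin.elim0, ?_⟩
    rw [iSup_of_empty, Set.range_eq_empty, Submodule.span_empty]
  | succ m ih =>
    match m with
    | 0 =>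
      intro c hc hprinc v hv
      obtain ⟨g, hg⟩ := hprinc.principal
      rw [Fin.prod_univ_one] at hg
      refine ⟨fun _ => g • v 0, ?_⟩
      have hrange : Set.range (fun _ : Fin 1 => g • v 0) = {g • v 0} := Set.range_const
      rw [hrange]
      rw [show (⨆ i : Fin 1, IdS (c i) (v i)) = IdS (c 0) (v 0) from iSup_unique _]
      apply le_antisymm
      · intro z hz
        obtain ⟨a, ha, rfl⟩ := mem_IdS.1 hz
        rw [hg] at ha
        obtain ⟨r, rfl⟩ := Ideal.mem_span_singleton'.1 ha
        rw [mul_smul]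
        exact Submodule.smul_mem _ r (Submodule.mem_span_singleton_self _)
      · rw [Submodule.span_le, Set.singleton_subset_iff]
        exact mem_IdS.2 ⟨g, by rw [hg]; exact Submodule.mem_span_singleton_self g, rfl⟩
    | Nat.succ m' =>
      intro c hc hprinc v hv
      obtain ⟨u, α, β, hαβ, heq⟩ :=
        pair_combine (F := F) (c 0) (c 1) (hc 0) (hc 1) (v 0) (v 1)
      set w₀ : V := α • v 0 + β • v 1 with hw₀
      set tail : Fin m' → V := fun i => v i.succ.succ with htail
      set c' : Fin (m'+1) → Ideal R := Fin.cons (c 0 * c 1) (fun i => c i.succ.succ) with hc'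
      set v' : Fin (m'+1) → V := Fin.cons w₀ tail with hv'
      have hc'ne : ∀ i, c' i ≠ 0 := by
        intro i
        refine Fin.cases ?_ ?_ i
        · simpa [hc'] using mul_ne_zero (hc 0) (hc 1)
        · intro j; simpa [hc'] using hc j.succ.succ
      have hprod : (∏ i, c' i) = ∏ i, c i := by
        rw [Fin.prod_univ_succ, Fin.prod_univ_succ, Fin.prod_univ_succ]
        simp only [hc', Fin.cons_zero, Fin.cons_succ]
        rw [mul_assoc, Fin.succ_zero_eq_one]
      have htind : LinearIndependent F tail := by
        have hinj : Injective (fun i : Fin m' => i.succ.succ) := by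
          intro a b hab
          exact Fin.succ_injective _ (Fin.succ_injective _ hab)
        exact hv.comp _ hinj
      have hwnot : w₀ ∉ Submodule.span F (Set.range tail) := by
        intro hmem
        rw [Submodule.mem_span_range_iff_exists_fun] at hmem
        obtain ⟨cf, hcf⟩ := hmem
        have hdep := linearIndependent_iff'.1 hv Finset.univ
          (Fin.cons α (Fin.cons β (fun i => - cf i))) ?_
        · apply hαβ
          constructor
          · simpa using hdep 0 (Finset.mem_univ _)
          · simpa using hdep 1 (Finset.mem_univ _)
        · rw [Fin.sum_univ_succ, Fin.sum_univ_succ]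
          simp only [Fin.cons_zero, Fin.cons_succ]
          rw [Fin.succ_zero_eq_one]
          have hsum : ∑ i : Fin m', (- cf i) • v i.succ.succ = - w₀ := by
            rw [← hcf]
            rw [← Finset.sum_neg_distrib]
            exact Finset.sum_congr rfl fun i _ => by rw [neg_smul, htail]
          rw [hsum, hw₀]
          abel
      have hv'ind : LinearIndependent F v' := by
        rw [hv', linearIndependent_fin_cons]
        exact ⟨htind, hwnot⟩
      obtain ⟨w', hw'⟩ := ih c' hc'ne (by rw [hprod]; exact hprinc) v' hv'ind
      refine ⟨Fin.cons u w', ?_⟩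
      have hsplit : (⨆ i, IdS (c i) (v i)) =
          IdS (c 0) (v 0) ⊔ (IdS (c 1) (v 1) ⊔
            ⨆ i : Fin m', IdS (c i.succ.succ) (v i.succ.succ)) := by
        rw [iSup_fin_succ (fun i => IdS (c i) (v i)),
          iSup_fin_succ (fun i : Fin (m'+1) => IdS (c i.succ) (v i.succ)),
          Fin.succ_zero_eq_one]
      have hsplit' : (⨆ i, IdS (c' i) (v' i)) =
          IdS (c 0 * c 1) w₀ ⊔ ⨆ i : Fin m', IdS (c i.succ.succ) (v i.succ.succ) := by
        rw [iSup_fin_succ (fun i => IdS (c' i) (v' i))]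
        simp only [hc', hv', Fin.cons_zero, Fin.cons_succ, htail]
      rw [hsplit, ← sup_assoc, heq, sup_assoc, ← hsplit', hw']
      rw [show Set.range (Fin.cons u w' : Fin (m'+2) → V) = insert u (Set.range w') from
        Fin.range_cons u w']
      rw [Submodule.span_insert]

end DD

section Comb
variable {R : Type*} [CommRing R]

lemma iic_eq_image {n : ℕ} (k : Fin n) (h1 : k.1+1 ≤ n) :
    Finset.Iic k = Finset.image (Fin.castLE h1) Finset.univ := by
  ext j
  simp only [Finset.mem_Iic, Finset.mem_image, Finset.mem_univ, true_and]
  constructor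
  · intro hj
    exact ⟨⟨j.1, Nat.lt_succ_of_le hj⟩, by ext; simp⟩
  · rintro ⟨i, rfl⟩
    rw [Fin.le_def]
    exact Nat.lt_succ_iff.1 i.2

lemma chain_prod_le {n : ℕ} (e : Fin n → Ideal R)
    (hchain : ∀ i j : Fin n, i ≤ j → e i ∣ e j) [IsDedekindDomain R] [IsDomain R]
    {m : ℕ} (hm : m ≤ n) (f : Fin m → Fin n) (hf : Injective f) :
    ∏ i, e (f i) ≤ ∏ i : Fin m, e (Fin.castLE hm i) := by
  classical
  set S := Finset.image f Finset.univ with hS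
  have hcard : S.card = m := by
    rw [hS, Finset.card_image_of_injective _ hf, Finset.card_univ, Fintype.card_fin]
  set ord := S.orderEmbOfFin hcard with hord
  have h1 : ∏ i, e (f i) = ∏ j ∈ S, e j :=
    (Finset.prod_image (fun a _ b _ hab => hf hab)).symm
  have himg : Finset.image (fun i => ord i) Finset.univ = S := by
    apply Finset.coe_injective
    rw [Finset.coe_image, Finset.coe_univ, Set.image_univ]
    exact Finset.range_orderEmbOfFin S hcard
  have h2 : ∏ j ∈ S, e j = ∏ i, e (ord i) := by
    rw [← himg, Finset.prod_image (fun a _ b _ hab => ord.injective hab)]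
  rw [h1, h2]
  apply ideal_prod_mono
  intro i _
  apply Ideal.le_of_dvd
  apply hchain
  rw [Fin.le_def]
  have hsm : StrictMono (fun j : Fin m => ((ord j : Fin n) : ℕ)) := by
    intro a b hab
    have := ord.strictMono hab
    rwa [Fin.lt_def] at this
  have := sm_le hsm i.1 i.2
  simpa using this

end Comb

end Stmt7Aux

open NumberField Stmt7Aux

set_option maxHeartbeats 2000000 in
/-- Existence of unimodular matrices with prescribed elementary divisors:
over the ring of integers `Λ = 𝓞 K` of a number field, given nonzero integral
ideals `e₀ ∣ e₁ ∣ … ∣ e_{n-1}`, there is an invertible integral matrix whose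
`k`-th determinantal divisor is `e₀ ⋯ e_{k-1}` for every `k` if and only if
the product `e₀ ⋯ e_{n-1}` is principal. -/
theorem stmt7 (K : Type*) [Field K] [NumberField K]
    (n : ℕ) (e : Fin n → Ideal (𝓞 K))
    (he : ∀ i, e i ≠ 0)
    (hchain : ∀ i j : Fin n, i ≤ j → e i ∣ e j) :
    (∃ M : Matrix (Fin n) (Fin n) (𝓞 K), M.det ≠ 0 ∧
      ∀ k : Fin n, detDiv (k.1 + 1) M = ∏ i ∈ Finset.Iic k, e i) ↔
    (∏ i, e i).IsPrincipal := by
  classical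
  constructor
  · rintro ⟨M, hMdet, hM⟩
    cases n with
    | zero =>
      refine ⟨⟨1, ?_⟩⟩
      rw [Finset.univ_eq_empty, Finset.prod_empty, Ideal.one_eq_top]
      exact (Ideal.span_singleton_one (α := 𝓞 K)).symm
    | succ m =>
      have hk := hM (Fin.last m)
      have huniv : Finset.Iic (Fin.last m) = Finset.univ := by
        ext j; simp [Fin.le_last]
      rw [huniv] at hk
      have : (∏ i, e i) = Ideal.span {M.det} := by
        rw [← hk]
        have : (Fin.last m).1 + 1 = m + 1 := rfl
        rw [this, detDiv_top]
      exact this ▸ ⟨⟨M.det, rfl⟩⟩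
  · intro hprinc
    -- Setup
    set R := 𝓞 K
    let B := Pi.basisFun K (Fin n)
    have hBind : LinearIndependent K ⇑B := B.linearIndependent
    obtain ⟨w, hw⟩ := free_of_principal_prod (R := R) (F := K) (V := Fin n → K)
      n e he hprinc ⇑B hBind
    have halg : Function.Injective (algebraMap R K) := IsFractionRing.injective R K
    -- coordinates of elements of the supremum
    have hle : (⨆ i, IdS (e i) (⇑B i)) ≤
        Submodule.pi Set.univ (fun i => Submodule.map (Algebra.linearMap R K) (e i)) := by
      apply iSup_le
      intro i0 z hz
      obtain ⟨a, ha, rfl⟩ := mem_IdS.1 hz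
      intro i1 _
      rw [Pi.smul_apply, Pi.basisFun_apply]
      by_cases h01 : i0 = i1
      · subst h01
        rw [Pi.single_eq_same]
        refine Submodule.mem_map.2 ⟨a, ha, ?_⟩
        simp [Algebra.smul_def]; rfl
      · rw [Pi.single_eq_of_ne (Ne.symm h01)]
        rw [smul_zero]
        exact Submodule.zero_mem _
    have hcoord : ∀ j i, ∃ a, a ∈ e i ∧ algebraMap R K a = w j i := by
      intro j i
      have hwj : w j ∈ Submodule.span R (Set.range w) :=
        Submodule.subset_span (Set.mem_range_self j)
      rw [← hw] at hwj
      have := hle hwj i (Set.mem_univ i)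
      obtain ⟨a, ha, haeq⟩ := this
      exact ⟨a, ha, haeq⟩
    choose Mc hMc1 hMc2 using hcoord
    set M : Matrix (Fin n) (Fin n) R := Matrix.of (fun i j => Mc j i) with hMdef
    have hMent : ∀ i j, M i j ∈ e i := fun i j => hMc1 j i
    have hMalg : ∀ i j, algebraMap R K (M i j) = w j i := fun i j => hMc2 j i
    -- the K-span of w is everything
    have htop : Submodule.span K (Set.range w) = ⊤ := by
      rw [eq_top_iff, ← B.span_eq, Submodule.span_le]
      rintro _ ⟨i, rfl⟩
      obtain ⟨a, haz, ha0⟩ := Submodule.exists_mem_ne_zero_of_ne_bot (he i)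
      have h1 : a • ⇑B i ∈ Submodule.span R (Set.range w) := by
        rw [← hw]
        exact le_iSup (fun i => IdS (e i) (⇑B i)) i (mem_IdS.2 ⟨a, haz, rfl⟩)
      have h2 : a • ⇑B i ∈ Submodule.span K (Set.range w) :=
        Submodule.span_subset_span R K _ h1
      have ha' : algebraMap R K a ≠ 0 := by simpa using halg.ne ha0
      have hstd : ⇑B i = (algebraMap R K a)⁻¹ • (a • ⇑B i) := by
        rw [← algebraMap_smul K a (⇑B i), inv_smul_smul₀ ha']
      rw [SetLike.mem_coe, hstd]
      exact Submodule.smul_mem _ _ h2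
    -- det nonzero
    have hdet' : (M.map (algebraMap R K)).det ≠ 0 := by
      intro h0
      obtain ⟨v, hv0, hveq⟩ := (Matrix.exists_mulVec_eq_zero_iff (M := M.map (algebraMap R K))).2 h0
      have hr : LinearMap.range (M.map (algebraMap R K)).mulVecLin = ⊤ := by
        rw [Matrix.range_mulVecLin]
        have htr : (M.map (algebraMap R K)).transpose = w := by
          funext j i
          simp [Matrix.transpose_apply, Matrix.map_apply, hMalg i j]
        rw [show (M.map (algebraMap R K)).col = w from htr, htop]
      have hinj : Function.Injective (M.map (algebraMap R K)).mulVecLin :=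
        (LinearMap.injective_iff_surjective).2
          (LinearMap.range_eq_top.1 hr)
      apply hv0
      apply hinj
      rw [map_zero]
      simpa [Matrix.mulVecLin_apply] using hveq
    have hdet : M.det ≠ 0 := by
      intro h0
      apply hdet'
      have := RingHom.map_det (algebraMap R K) M
      rw [h0, map_zero] at this
      exact this.symm
    refine ⟨M, hdet, fun k => ?_⟩
    have hk1 : k.1 + 1 ≤ n := k.2
    set f : Fin (k.1+1) → Fin n := Fin.castLE hk1 with hfdef
    have hinjf : Function.Injective f := Fin.castLE_injective hk1
    apply le_antisymm
    · -- upper bound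
      rw [detDiv, Ideal.span_le]
      rintro d ⟨f', g', hf', hg', rfl⟩
      have h1 : (M.submatrix f' g').det ∈ ∏ i : Fin (k.1+1), e (f' i) := by
        rw [Matrix.det_apply']
        apply Ideal.sum_mem
        intro σ _
        apply Ideal.mul_mem_left
        have h2 : ∏ i, (M.submatrix f' g') (σ i) i
            = ∏ i, M (f' i) (g' (σ.symm i)) := by
          rw [← Equiv.prod_comp σ (fun j => M (f' j) (g' (σ.symm j)))]
          exact Finset.prod_congr rfl fun i _ => by
            simp [Matrix.submatrix_apply, Equiv.symm_apply_apply]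
        rw [h2]
        exact Ideal.prod_mem_prod fun i _ => hMent (f' i) (g' (σ.symm i))
      have h3 : ∏ i : Fin (k.1+1), e (f' i) ≤ ∏ i ∈ Finset.Iic k, e i := by
        rw [iic_eq_image k hk1, Finset.prod_image (fun a _ b _ hab => hinjf hab)]
        exact chain_prod_le e hchain hk1 f' hf'
      exact h3 h1
    · -- lower bound
      apply ideal_prod_le
      intro x hx
      set x' : Fin n → R := fun i => if hi : i ∈ Finset.Iic k then x i else 0 with hx'def
      have hx'mem : ∀ i, x' i ∈ e i := by
        intro i
        simp only [hx'def]
        split_ifs with hi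
        · exact hx i hi
        · exact Submodule.zero_mem _
      -- find C with M * C = diagonal x'
      have hcol : ∀ j, ∃ cvec : Fin n → R, ∑ t, cvec t • w t = (x' j) • ⇑B j := by
        intro j
        have hmem : (x' j) • ⇑B j ∈ Submodule.span R (Set.range w) := by
          rw [← hw]
          exact le_iSup (fun i => IdS (e i) (⇑B i)) j (mem_IdS.2 ⟨x' j, hx'mem j, rfl⟩)
        rwa [Submodule.mem_span_range_iff_exists_fun] at hmem
      choose Cc hCc using hcol
      set C : Matrix (Fin n) (Fin n) R := Matrix.of (fun t j => Cc j t) with hCdef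
      have hMC : M * C = Matrix.diagonal x' := by
        refine Matrix.ext fun i j => halg ?_
        rw [Matrix.mul_apply, map_sum]
        have hcj := congrFun (hCc j) i
        simp only [Finset.sum_apply, Pi.smul_apply] at hcj
        calc ∑ t, algebraMap R K (M i t * C t j)
            = ∑ t, Cc j t • w t i := by
              refine Finset.sum_congr rfl fun t _ => ?_
              rw [show C t j = Cc j t from rfl, _root_.map_mul, hMalg i t, Algebra.smul_def]
              ring
          _ = (x' j • ⇑B j) i := hcj
          _ = algebraMap R K (Matrix.diagonal x' i j) := by
              rw [Pi.smul_apply, Pi.basisFun_apply]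
              by_cases hij : i = j
              · subst hij
                rw [Pi.single_eq_same, Matrix.diagonal_apply_eq, Algebra.smul_def, mul_one]
              · rw [Pi.single_eq_of_ne hij, smul_zero,
                  Matrix.diagonal_apply_ne _ hij, map_zero]
      have hsub : (Matrix.diagonal x').submatrix f f
          = Matrix.diagonal (fun i => x' (f i)) := by
        ext i j
        by_cases hij : i = j
        · subst hij; simp [Matrix.submatrix_apply]
        · rw [Matrix.submatrix_apply, Matrix.diagonal_apply_ne _ (fun h => hij (hinjf h)),
            Matrix.diagonal_apply_ne _ hij]
      have hdd : ((M * C).submatrix f f).det = ∏ i : Fin (k.1+1), x' (f i) := by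
        rw [hMC, hsub, Matrix.det_diagonal]
      have hmem2 : ((M * C).submatrix f f).det ∈ detDiv (k.1+1) M := by
        have hfac : (M * C).submatrix f f = (M.submatrix f id) * (C.submatrix id f) := by
          ext i j
          simp [Matrix.mul_apply, Matrix.submatrix_apply]
        rw [hfac]
        apply det_mul_mem
        intro r
        by_cases hr : Function.Injective r
        · apply Ideal.subset_span
          refine ⟨f, r, hinjf, hr, ?_⟩
          rw [Matrix.submatrix_submatrix]
          rfl
        · have : ((M.submatrix f id).submatrix id r).det = 0 := by
            rw [Function.not_injective_iff] at hr
            obtain ⟨j1, j2, heqr, hne⟩ := hr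
            exact Matrix.det_zero_of_column_eq hne (fun i => by
              simp [Matrix.submatrix_apply, heqr])
          rw [this]
          exact Ideal.zero_mem _
      have hfin : ∏ i ∈ Finset.Iic k, x i = ∏ i : Fin (k.1+1), x' (f i) := by
        rw [iic_eq_image k hk1, Finset.prod_image (fun a _ b _ hab => hinjf hab)]
        refine Finset.prod_congr rfl fun i _ => ?_
        have hi : f i ∈ Finset.Iic k := by
          rw [iic_eq_image k hk1]
          exact Finset.mem_image_of_mem _ (Finset.mem_univ i)
        simp only [hx'def]
        rw [dif_pos hi]
      rw [hfin, ← hdd]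
      exact hmem2
end

section
/- Let Λ be a Dedekind domain with fraction field Ω and ι an involution; suppose every hermitian invertible H ∈ Matₙ(Ω) admits a coprime fraction H' = A₀⁻¹B₀ with A₀, B₀ ∈ Matₙ(Λ) invertible. Then for every hermitian pair (A, B) over Λ with A invertible over Ω there exists an associated coprime hermitian pair (A', B'), i.e., A', B' ∈ Matₙ(Λ) with A' B* = B' A* and (A' | B') having trivial elementary divisors. -/
open Matrix Polynomial Function

section Aux
variable {R : Type*} [CommRing R]

/-- Cauchy–Binet style expansion of `det (M * Q)` over column choices. -/
lemma det_mul_expand {n : ℕ} {J : Type*} [Fintype J] [DecidableEq J]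
    (M : Matrix (Fin n) J R) (Q : Matrix J (Fin n) R) :
    (M * Q).det = ∑ f : Fin n → J, (∏ j, Q (f j) j) * (M.submatrix id f).det := by
  have h0 : (M * Q).det = ((M * Q)ᵀ).det := (Matrix.det_transpose _).symm
  rw [h0]
  have h1 : ((M * Q)ᵀ).det
      = Matrix.detRowAlternating (R := R) (Matrix.of fun j => ∑ k : J, Q k j • (Mᵀ k)) := by
    congr 1
    ext j i
    simp [Matrix.mul_apply, mul_comm]
  rw [h1]
  have h2 := (Matrix.detRowAlternating (R := R) (n := Fin n)).toMultilinearMap.map_sum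
    (α := fun _ : Fin n => J) (g := fun j k => Q k j • (Mᵀ k))
  simp only [AlternatingMap.coe_multilinearMap] at h2
  rw [show (Matrix.of fun j => ∑ k : J, Q k j • (Mᵀ k))
      = (fun j => ∑ k : J, Q k j • (Mᵀ k)) from rfl, h2]
  refine Finset.sum_congr rfl fun f _ => ?_
  have h3 := (Matrix.detRowAlternating (R := R) (n := Fin n)).toMultilinearMap.map_smul_univ
    (fun j => Q (f j) j) (fun j => Mᵀ (f j))
  simp only [AlternatingMap.coe_multilinearMap] at h3
  rw [h3, smul_eq_mul]
  congr 1
  have : (fun j => Mᵀ (f j)) = ((M.submatrix id f)ᵀ : Matrix (Fin n) (Fin n) R) := rfl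
  rw [show Matrix.detRowAlternating (R := R) (fun j => Mᵀ (f j))
      = ((M.submatrix id f)ᵀ).det from rfl, Matrix.det_transpose]
end Aux

section Aux2
variable {Λ : Type*} [CommRing Λ]

/-- Every minor of `M * P` lies in the span of the minors of `M`. -/
lemma minorSpan_mul_le {n : ℕ} (M : Matrix (Fin n) (Fin n ⊕ Fin n) Λ)
    (P : Matrix (Fin n ⊕ Fin n) (Fin n ⊕ Fin n) Λ) :
    Ideal.span { d : Λ | ∃ g : Fin n → (Fin n ⊕ Fin n), Function.Injective g ∧
        d = ((M * P).submatrix id g).det }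
      ≤ Ideal.span { d : Λ | ∃ g : Fin n → (Fin n ⊕ Fin n), Function.Injective g ∧
        d = (M.submatrix id g).det } := by
  rw [Ideal.span_le]
  rintro d ⟨g, hg, rfl⟩
  have h1 : (M * P).submatrix id g = M * (P.submatrix id g) := by
    ext i j
    simp [Matrix.mul_apply]
  rw [h1, det_mul_expand]
  apply Ideal.sum_mem
  intro f _
  by_cases hf : Function.Injective f
  · exact Ideal.mul_mem_left _ _ (Ideal.subset_span ⟨f, hf, rfl⟩)
  · simp only [Function.Injective, not_forall] at hf
    obtain ⟨i, j, hij, hne⟩ := hf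
    rw [Matrix.det_zero_of_column_eq hne (fun k => by simp [hij])]
    simp

/-- If the ring is infinite then the fixed set of an involution is infinite. -/
lemma fixed_infinite [IsDomain Λ] (ιΛ : Λ →+* Λ) (hιΛ : ∀ x, ιΛ (ιΛ x) = x)
    (hinf : Infinite Λ) : {x : Λ | ιΛ x = x}.Infinite := by
  by_contra h
  rw [Set.not_infinite] at h
  have key : (Set.univ : Set Λ) ⊆
      ⋃ p ∈ {x : Λ | ιΛ x = x}, ⋃ q ∈ {x : Λ | ιΛ x = x},
        {x : Λ | (X ^ 2 - C p * X + C q : Λ[X]).IsRoot x} := by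
    intro a _
    simp only [Set.mem_iUnion, Set.mem_setOf_eq]
    refine ⟨a + ιΛ a, by simp [map_add, hιΛ, add_comm], a * ιΛ a,
      by simp [_root_.map_mul, hιΛ, mul_comm], ?_⟩
    simp only [Polynomial.IsRoot, eval_add, eval_sub, eval_pow, eval_mul, eval_C, eval_X]
    ring
  have hfin : ∀ p q : Λ, {x : Λ | (X ^ 2 - C p * X + C q : Λ[X]).IsRoot x}.Finite := by
    intro p q
    apply Polynomial.finite_setOf_isRoot
    intro h0
    have := congrArg (fun r : Λ[X] => r.coeff 2) h0
    simp [coeff_X, coeff_one] at this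
  have : (Set.univ : Set Λ).Finite :=
    Set.Finite.subset (Set.Finite.biUnion h fun p _ => Set.Finite.biUnion h fun q _ => hfin p q) key
  rw [Set.finite_univ_iff] at this
  exact absurd this (by rw [not_finite_iff_infinite]; exact hinf)

/-- A ring hom between fields commutes with matrix inversion. -/
lemma map_nonsing_inv {K L : Type*} [Field K] [Field L] (f : K →+* L)
    {m : Type*} [Fintype m] [DecidableEq m] (M : Matrix m m K) :
    (M⁻¹).map f = (M.map f)⁻¹ := by
  rw [Matrix.inv_def, Matrix.inv_def]
  have hadj : (M.map f).adjugate = (M.adjugate).map f := by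
    have := (RingHom.map_adjugate f M).symm
    simpa [RingHom.mapMatrix_apply] using this
  have hdet : (M.map f).det = f M.det := by
    have := RingHom.map_det f M
    simpa [RingHom.mapMatrix_apply] using this.symm
  rw [hadj, hdet, Ring.inverse_eq_inv', Ring.inverse_eq_inv', ← map_inv₀ f]
  ext i j
  simp

lemma eval_charpoly' {K : Type*} [CommRing K] {m : Type*} [Fintype m] [DecidableEq m]
    (M : Matrix m m K) (x : K) :
    (M.charpoly).eval x = (Matrix.diagonal (fun _ => x) - M).det := by
  rw [Matrix.charpoly]
  have : (Matrix.charmatrix M).det.eval x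
      = (((Matrix.charmatrix M)).map (Polynomial.evalRingHom x)).det := by
    have := RingHom.map_det (Polynomial.evalRingHom x) (Matrix.charmatrix M)
    simpa [RingHom.mapMatrix_apply] using this
  rw [this]
  congr 1
  ext i j
  by_cases h : i = j <;> simp [Matrix.charmatrix_apply, Matrix.diagonal, h]
end Aux2

/-- Existence of associated coprime hermitian pairs.  `Λ` is a Dedekind
domain with involution `ιΛ`, extended to an involution `ιΩ` of the fraction
field `Ω`.  A pair `(A, B)` is hermitian if `A B* = B A*`, coprime if the
ideal of the `n × n` minors of `(A | B)` is all of `Λ`, and `(A', B')` is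
associated to `(A, B)` if `A' B* = B' A*`.  Assuming every invertible
hermitian `H ∈ Matₙ(Ω)` admits a coprime fraction `H = A₀⁻¹ B₀`, every
hermitian pair `(A, B)` with `A` invertible over `Ω` admits an associated
coprime hermitian pair. -/
theorem stmt16 (Λ : Type*) [CommRing Λ] [IsDedekindDomain Λ]
    (ιΛ : Λ →+* Λ) (hιΛ : ∀ x, ιΛ (ιΛ x) = x)
    (ιΩ : FractionRing Λ →+* FractionRing Λ) (hιΩ : ∀ x, ιΩ (ιΩ x) = x)
    (hcomp : ∀ x : Λ, ιΩ (algebraMap Λ (FractionRing Λ) x)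
      = algebraMap Λ (FractionRing Λ) (ιΛ x))
    (n : ℕ)
    (coprime : Matrix (Fin n) (Fin n) Λ → Matrix (Fin n) (Fin n) Λ → Prop)
    (hcoprime : ∀ X Y, coprime X Y ↔
      Ideal.span { d : Λ | ∃ g : Fin n → (Fin n ⊕ Fin n), Function.Injective g ∧
        d = (((Matrix.of fun i => Sum.elim (X i) (Y i) :
          Matrix (Fin n) (Fin n ⊕ Fin n) Λ)).submatrix id g).det } = ⊤)
    (hfrac : ∀ H : Matrix (Fin n) (Fin n) (FractionRing Λ),
      (H.map ιΩ)ᵀ = H → H.det ≠ 0 →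
      ∃ A₀ B₀ : Matrix (Fin n) (Fin n) Λ, A₀.det ≠ 0 ∧ B₀.det ≠ 0 ∧
        H = (A₀.map (algebraMap Λ (FractionRing Λ)))⁻¹ *
          (B₀.map (algebraMap Λ (FractionRing Λ))) ∧ coprime A₀ B₀) :
    ∀ A B : Matrix (Fin n) (Fin n) Λ,
      A * ((B.map ιΛ)ᵀ) = B * ((A.map ιΛ)ᵀ) → A.det ≠ 0 →
      ∃ A' B' : Matrix (Fin n) (Fin n) Λ,
        A' * ((B.map ιΛ)ᵀ) = B' * ((A.map ιΛ)ᵀ) ∧ coprime A' B' := by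
  classical
  intro A B hherm hdet
  by_cases hu : IsUnit A.det
  · -- `A` itself is invertible over `Λ`; the pair `(A, B)` is coprime.
    refine ⟨A, B, hherm, ?_⟩
    rw [hcoprime]
    have hsub : ((Matrix.of fun i => Sum.elim (A i) (B i) :
        Matrix (Fin n) (Fin n ⊕ Fin n) Λ)).submatrix id Sum.inl = A := by
      ext i j; simp
    exact Ideal.eq_top_of_isUnit_mem _
      (Ideal.subset_span ⟨Sum.inl, Sum.inl_injective, by rw [hsub]⟩) hu
  · set K := FractionRing Λ with hK
    set φ : Λ →+* K := (algebraMap Λ K : Λ →+* K) with hφdef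
    have hφinj : Function.Injective φ := IsFractionRing.injective Λ K
    have hιΩinj : Function.Injective ιΩ := Function.LeftInverse.injective hιΩ
    have mapinj : ∀ X Y : Matrix (Fin n) (Fin n) Λ, X.map φ = Y.map φ → X = Y := by
      intro X Y h
      ext i j
      exact hφinj (by simpa using congrFun (congrFun h i) j)
    have hmapcomm : ∀ X : Matrix (Fin n) (Fin n) Λ,
        (X.map ιΛ).map φ = (X.map φ).map ιΩ := by
      intro X; ext i j; simp [hcomp]
    -- `Λ` is infinite, hence the fixed set of the involution is infinite.
    have hinfΛ : Infinite Λ := by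
      by_contra h
      rw [not_infinite_iff_finite] at h
      obtain ⟨b, hb⟩ := (Finite.isField_of_domain Λ).mul_inv_cancel hdet
      exact hu (IsUnit.of_mul_eq_one _ hb)
    have hT := fixed_infinite ιΛ hιΛ hinfΛ
    -- pass to the fraction field
    set AK : Matrix (Fin n) (Fin n) K := A.map φ with hAKdef
    set BK : Matrix (Fin n) (Fin n) K := B.map φ with hBKdef
    have hdetmap : ∀ X : Matrix (Fin n) (Fin n) Λ, (X.map φ).det = φ X.det := by
      intro X
      simpa [RingHom.mapMatrix_apply] using (RingHom.map_det φ X).symm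
    have hφne : ∀ x : Λ, x ≠ 0 → φ x ≠ 0 := by
      intro x hx h
      exact hx (hφinj (by simpa using h))
    have hdetAK : AK.det ≠ 0 := by rw [hAKdef, hdetmap]; exact hφne _ hdet
    have hdetAKu : IsUnit AK.det := isUnit_iff_ne_zero.mpr hdetAK
    set H0 : Matrix (Fin n) (Fin n) K := AK⁻¹ * BK with hH0def
    -- choose a fixed element `c` avoiding the roots of `det (H0 + x • 1)`
    set q : Polynomial K := Matrix.charpoly (-H0) with hqdef
    have hqne : q ≠ 0 := (Matrix.charpoly_monic _).ne_zero
    have hroots : {x : K | q.IsRoot x}.Finite := Polynomial.finite_setOf_isRoot hqne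
    have hbad : (φ ⁻¹' {x : K | q.IsRoot x}).Finite :=
      hroots.preimage (Set.injOn_of_injective hφinj)
    obtain ⟨c, hcmem⟩ := (hT.diff hbad).nonempty
    obtain ⟨hcT, hcgood⟩ := hcmem
    have hc : ιΛ c = c := hcT
    have hceval : q.eval (φ c) ≠ 0 := fun h => hcgood h
    set H : Matrix (Fin n) (Fin n) K := H0 + (φ c) • 1 with hHdef
    have hdetH : H.det ≠ 0 := by
      intro h
      apply hceval
      have h2 : Matrix.diagonal (fun _ : Fin n => φ c) - (-H0) = H := by
        rw [sub_neg_eq_add, ← Matrix.smul_one_eq_diagonal, add_comm]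
      rw [hqdef, eval_charpoly' (-H0) (φ c), h2, h]
    -- conjugate transposes over `K`
    have hstar : ∀ X : Matrix (Fin n) (Fin n) Λ,
        ((X.map ιΛ)ᵀ).map φ = ((X.map φ).map ιΩ)ᵀ := by
      intro X
      rw [Matrix.transpose_map, hmapcomm]
    have hhermK : AK * ((BK.map ιΩ)ᵀ) = BK * ((AK.map ιΩ)ᵀ) := by
      have h := congrArg (fun X : Matrix (Fin n) (Fin n) Λ => X.map φ) hherm
      simp only [Matrix.map_mul] at h
      rw [hstar B, hstar A] at h
      exact h
    have hdetAKs : IsUnit ((AK.map ιΩ)ᵀ).det := by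
      rw [Matrix.det_transpose]
      have : (AK.map ιΩ).det = ιΩ AK.det := by
        simpa [RingHom.mapMatrix_apply] using (RingHom.map_det ιΩ AK).symm
      rw [this]
      exact isUnit_iff_ne_zero.mpr (fun h => hdetAK (hιΩinj (by simpa using h)))
    have hherm' : ((BK.map ιΩ)ᵀ) * ((AK.map ιΩ)ᵀ)⁻¹ = AK⁻¹ * BK := by
      have h1 := congrArg (fun X => AK⁻¹ * X * ((AK.map ιΩ)ᵀ)⁻¹) hhermK
      calc ((BK.map ιΩ)ᵀ) * ((AK.map ιΩ)ᵀ)⁻¹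
          = AK⁻¹ * (AK * ((BK.map ιΩ)ᵀ)) * ((AK.map ιΩ)ᵀ)⁻¹ := by
            rw [← Matrix.mul_assoc, Matrix.nonsing_inv_mul _ hdetAKu, Matrix.one_mul]
        _ = AK⁻¹ * (BK * ((AK.map ιΩ)ᵀ)) * ((AK.map ιΩ)ᵀ)⁻¹ := h1
        _ = AK⁻¹ * BK * (((AK.map ιΩ)ᵀ) * ((AK.map ιΩ)ᵀ)⁻¹) := by
            rw [Matrix.mul_assoc, Matrix.mul_assoc, Matrix.mul_assoc]
        _ = AK⁻¹ * BK := by rw [Matrix.mul_nonsing_inv _ hdetAKs, Matrix.mul_one]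
    have hHerm : (H.map ιΩ)ᵀ = H := by
      have hsplit : (H.map ιΩ)ᵀ = ((H0.map ιΩ)ᵀ) + (((φ c • (1 : Matrix (Fin n) (Fin n) K)).map ιΩ)ᵀ) := by
        ext i j; simp [hHdef]
      have hsc : (((φ c • (1 : Matrix (Fin n) (Fin n) K)).map ιΩ)ᵀ)
          = φ c • (1 : Matrix (Fin n) (Fin n) K) := by
        ext i j
        rcases eq_or_ne i j with h | h
        · subst h; simp [Matrix.one_apply, hcomp, hc]
        · simp [Matrix.one_apply, h, Ne.symm h]
      have h0 : ((H0.map ιΩ)ᵀ) = H0 := by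
        rw [hH0def, Matrix.map_mul, Matrix.transpose_mul, map_nonsing_inv ιΩ,
          Matrix.transpose_nonsing_inv, hherm']
      rw [hsplit, hsc, h0]
    obtain ⟨A₀, B₀, hA₀, hB₀, hHfac, hcop⟩ := hfrac H hHerm hdetH
    have hdetAK0u : IsUnit (A₀.map φ).det := by
      rw [hdetmap]; exact isUnit_iff_ne_zero.mpr (hφne _ hA₀)
    have hBK0 : A₀.map φ * H = B₀.map φ := by
      rw [hHfac, ← Matrix.mul_assoc, Matrix.mul_nonsing_inv _ hdetAK0u, Matrix.one_mul]
    refine ⟨A₀, B₀ - c • A₀, ?_, ?_⟩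
    · -- associatedness
      apply mapinj
      simp only [Matrix.map_mul]
      have hsub : (B₀ - c • A₀).map φ = B₀.map φ - (φ c) • A₀.map φ := by
        ext i j; simp
      have h5 : B₀.map φ - φ c • A₀.map φ = A₀.map φ * H0 := by
        rw [← hBK0, hHdef, Matrix.mul_add, mul_smul_comm, Matrix.mul_one, add_sub_cancel_right]
      rw [hsub, h5, hstar B, hstar A, ← hAKdef, ← hBKdef, Matrix.mul_assoc]
      congr 1
      rw [hH0def, Matrix.mul_assoc, ← hhermK, ← Matrix.mul_assoc,
        Matrix.nonsing_inv_mul _ hdetAKu, Matrix.one_mul]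
    · -- coprimality
      rw [hcoprime] at hcop ⊢
      have hM0 : (Matrix.of fun i => Sum.elim (A₀ i) (B₀ i) :
            Matrix (Fin n) (Fin n ⊕ Fin n) Λ)
          = (Matrix.of fun i => Sum.elim (A₀ i) ((B₀ - c • A₀) i) :
            Matrix (Fin n) (Fin n ⊕ Fin n) Λ) *
            (Matrix.fromBlocks 1 (c • 1) 0 1) := by
        show Matrix.fromCols A₀ B₀
          = (Matrix.fromCols A₀ (B₀ - c • A₀) : Matrix (Fin n) (Fin n ⊕ Fin n) Λ) *
            (Matrix.fromBlocks 1 (c • 1) 0 1 : Matrix (Fin n ⊕ Fin n) (Fin n ⊕ Fin n) Λ)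
        rw [Matrix.fromCols_mul_fromBlocks, Matrix.mul_one, Matrix.mul_zero, add_zero,
          mul_smul_comm, Matrix.mul_one, Matrix.mul_one]
        ext i (j | j)
        · simp [Matrix.fromCols]
        · simp [Matrix.fromCols]
      rw [← top_le_iff, ← hcop, hM0]
      exact minorSpan_mul_le _ _
end

section
/- Let Λ be the ring of integers of an imaginary quadratic-type extension and M ∈ Matₙ(Λ) invertible over the fraction field with elementary divisor ideals e₁ ∣ … ∣ eₙ satisfying ν_𝔭(N(eₙ)) ≤ ν_𝔭(m) for all primes 𝔭, where m ∈ o_K and N is the norm. Then the block matrix diag(M, m·(M*)⁻¹) has integral entries and satisfies (diag(M, m(M*)⁻¹))* J diag(M, m(M*)⁻¹) = m J. -/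
open Matrix

lemma adj_mem_detDiv {Λ : Type*} [CommRing Λ] {n : ℕ}
    (A : Matrix (Fin (n+1)) (Fin (n+1)) Λ) (i j : Fin (n+1)) :
    adjugate A i j ∈ detDiv n A := by
  rw [Matrix.adjugate_fin_succ_eq_det_submatrix]
  exact Ideal.mul_mem_left _ _ (Ideal.subset_span ⟨j.succAbove, i.succAbove,
    Fin.succAbove_right_injective, Fin.succAbove_right_injective, rfl⟩)

lemma detDiv_top {Λ : Type*} [CommRing Λ] {n : ℕ} (A : Matrix (Fin n) (Fin n) Λ) :
    detDiv n A = Ideal.span {A.det} := by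
  apply le_antisymm
  · rw [detDiv, Ideal.span_le]
    rintro d ⟨f, g, hf, hg, rfl⟩
    have ef : Function.Bijective f := Finite.injective_iff_bijective.mp hf
    have eg : Function.Bijective g := Finite.injective_iff_bijective.mp hg
    set e₁ := Equiv.ofBijective f ef
    set e₂ := Equiv.ofBijective g eg
    have h1 : A.submatrix f g = (A.submatrix e₁ e₁).submatrix id (e₂.trans e₁.symm) := by
      ext i j
      simp [e₁, e₂, Equiv.ofBijective_apply_symm_apply]
    rw [SetLike.mem_coe, Ideal.mem_span_singleton, h1, Matrix.det_permute',
      Matrix.det_submatrix_equiv_self]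
    exact Dvd.intro_left _ rfl
  · rw [Ideal.span_le, Set.singleton_subset_iff]
    exact Ideal.subset_span ⟨id, id, Function.injective_id, Function.injective_id, by simp⟩

lemma key_dvd (Λ : Type*) [CommRing Λ] [IsDedekindDomain Λ]
    (ιΛ : Λ →+* Λ) (hιΛ : ∀ x, ιΛ (ιΛ x) = x)
    (n : ℕ) (m : Λ)
    (M : Matrix (Fin n) (Fin n) Λ) (hM : M.det ≠ 0)
    (hdiv : detDiv n M * (detDiv n M).map ιΛ ∣
      Ideal.span {m} * detDiv (n - 1) M * ((detDiv (n - 1) M).map ιΛ)) :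
    ∀ i j, M.det ∣ m * adjugate M i j := by
  obtain _ | k := n
  · exact fun i => i.elim0
  intro i j
  simp only [Nat.add_sub_cancel] at hdiv
  set d := M.det with hd
  set D := detDiv k M with hD
  have hadj : ∀ i j, adjugate M i j ∈ D := fun i j => adj_mem_detDiv M i j
  have hdD : Ideal.span {d} ≤ D := by
    rw [Ideal.span_le, Set.singleton_subset_iff]
    have h0 : (M * adjugate M) 0 0 = d := by
      rw [Matrix.mul_adjugate]; simp [Matrix.one_apply, hd]
    rw [SetLike.mem_coe, ← h0, Matrix.mul_apply]
    exact Ideal.sum_mem _ fun c _ => Ideal.mul_mem_left _ _ (hadj c 0)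
  obtain ⟨E, hE⟩ : D ∣ Ideal.span {d} := Ideal.dvd_iff_le.mpr hdD
  have hιd0 : ιΛ d ≠ 0 := fun h => hM (by rw [← hιΛ d, h, map_zero])
  have hD0 : D ≠ 0 := by
    intro h
    have := hdD (Ideal.mem_span_singleton_self d)
    rw [h] at this
    exact hM (by simpa using this)
  have hDι0 : D.map ιΛ ≠ 0 := by
    intro h
    have : ιΛ d ∈ D.map ιΛ := Ideal.mem_map_of_mem _ (hdD (Ideal.mem_span_singleton_self d))
    rw [h] at this
    exact hιd0 (by simpa using this)
  rw [detDiv_top, ← hd, hE, Ideal.map_mul] at hdiv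
  have hEm : E * E.map ιΛ ∣ Ideal.span {m} := by
    have h2 : (D * D.map ιΛ) * (E * E.map ιΛ) ∣ (D * D.map ιΛ) * Ideal.span {m} := by
      have e1 : (D * D.map ιΛ) * (E * E.map ιΛ) = D * E * (D.map ιΛ * E.map ιΛ) := by ring
      have e2 : (D * D.map ιΛ) * Ideal.span {m} = Ideal.span {m} * D * D.map ιΛ := by ring
      rw [e1, e2]; exact hdiv
    exact (mul_dvd_mul_iff_left (mul_ne_zero hD0 hDι0)).mp h2
  have hmE : m ∈ E :=
    Ideal.mul_le_left (Ideal.le_of_dvd hEm (Ideal.mem_span_singleton_self m))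
  have hmem : m * adjugate M i j ∈ Ideal.span {d} := by
    rw [hE, mul_comm D E]
    exact Ideal.mul_mem_mul hmE (hadj i j)
  exact Ideal.mem_span_singleton.mp hmem

/-- Let `Λ` be a Dedekind domain (e.g. the ring of integers in a quadratic
extension) with involution `ιΛ`, extended to `ιΩ` on the fraction field `Ω`,
and let `m` be fixed by `ιΛ`.  If `M ∈ Matₙ(Λ)` is invertible over `Ω` and
its last elementary divisor `eₙ = dₙ/d_{n-1}` satisfies
`ν_𝔭(N(eₙ)) ≤ ν_𝔭(m)` at every prime — expressed by the divisibility
`dₙ · ι(dₙ) ∣ (m) · d_{n-1} · ι(d_{n-1})` of ideals — then `m (M*)⁻¹` is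
integral, and `diag(M, m (M*)⁻¹)` is a similitude matrix of factor `m`:
`S* J S = m • J` for `S = diag(M, m (M*)⁻¹)`. -/
theorem stmt17 (Λ : Type*) [CommRing Λ] [IsDedekindDomain Λ]
    (ιΛ : Λ →+* Λ) (hιΛ : ∀ x, ιΛ (ιΛ x) = x)
    (ιΩ : FractionRing Λ →+* FractionRing Λ) (hιΩ : ∀ x, ιΩ (ιΩ x) = x)
    (hcomp : ∀ x : Λ, ιΩ (algebraMap Λ (FractionRing Λ) x)
      = algebraMap Λ (FractionRing Λ) (ιΛ x))
    (n : ℕ) (m : Λ) (hm : ιΛ m = m) (hm0 : m ≠ 0)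
    (M : Matrix (Fin n) (Fin n) Λ) (hM : M.det ≠ 0)
    (hdiv : detDiv n M * (detDiv n M).map ιΛ ∣
      Ideal.span {m} * detDiv (n - 1) M * ((detDiv (n - 1) M).map ιΛ)) :
    let f := algebraMap Λ (FractionRing Λ)
    let Mstar := ((M.map f).map ιΩ)ᵀ
    let S : Matrix (Fin n ⊕ Fin n) (Fin n ⊕ Fin n) (FractionRing Λ) :=
      Matrix.fromBlocks (M.map f) 0 0 (f m • Mstar⁻¹)
    (∃ P : Matrix (Fin n) (Fin n) Λ, P.map f = f m • Mstar⁻¹) ∧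
    ((S.map ιΩ)ᵀ) * (Matrix.fromBlocks 0 1 (-1) 0) * S
      = f m • (Matrix.fromBlocks 0 1 (-1) 0) := by
  intro f Mstar S
  have hfinj : Function.Injective f := IsFractionRing.injective Λ (FractionRing Λ)
  have hMstar : Mstar = ((M.map ιΛ)ᵀ).map f := by
    ext i j
    show ιΩ (f (M j i)) = f (ιΛ (M j i))
    exact hcomp _
  set M' : Matrix (Fin n) (Fin n) Λ := (M.map ιΛ)ᵀ with hM'def
  have hdetM' : M'.det = ιΛ M.det := by
    rw [hM'def, Matrix.det_transpose]
    exact (RingHom.map_det ιΛ M).symm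
  have hιd0 : ιΛ M.det ≠ 0 := fun h => hM (by rw [← hιΛ M.det, h, map_zero])
  have hfd : f M'.det ≠ 0 := by
    rw [hdetM']
    exact fun h => hιd0 (hfinj (by simpa using h))
  have hdetMstar : Mstar.det ≠ 0 := by
    rw [hMstar, ← RingHom.mapMatrix_apply, ← RingHom.map_det]
    exact hfd
  have hA : (M.map f).det ≠ 0 := by
    rw [← RingHom.mapMatrix_apply, ← RingHom.map_det]
    exact fun h => hM (hfinj (by simpa using h))
  -- key divisibility for M'
  have hkey : ∀ i j, M.det ∣ m * adjugate M i j := key_dvd Λ ιΛ hιΛ n m M hM hdiv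
  have hadjM' : adjugate M' = ((adjugate M).map ιΛ)ᵀ := by
    rw [hM'def, ← Matrix.adjugate_transpose]
    congr 1
    rw [← RingHom.mapMatrix_apply, ← RingHom.mapMatrix_apply, RingHom.map_adjugate]
  have hkey' : ∀ i j, M'.det ∣ m * adjugate M' i j := by
    intro i j
    obtain ⟨q, hq⟩ := hkey j i
    refine ⟨ιΛ q, ?_⟩
    rw [hadjM', hdetM']
    show m * ιΛ (adjugate M j i) = ιΛ M.det * ιΛ q
    rw [← ιΛ.map_mul, ← hq, ιΛ.map_mul, hm]
  constructor
  · refine ⟨Matrix.of fun i j => (hkey' i j).choose, ?_⟩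
    have hPspec : ∀ i j, m * adjugate M' i j = M'.det * (hkey' i j).choose :=
      fun i j => (hkey' i j).choose_spec
    ext i j
    have hinv : Mstar⁻¹ = (Mstar.det)⁻¹ • adjugate Mstar := by
      rw [Matrix.inv_def, Ring.inverse_eq_inv']
    rw [hinv]
    simp only [Matrix.map_apply, Matrix.smul_apply, smul_eq_mul, Matrix.of_apply]
    have hadjMstar : adjugate Mstar = (adjugate M').map f := by
      rw [hMstar]
      exact (RingHom.map_adjugate f M').symm
    have hdetfd : Mstar.det = f M'.det := by
      rw [hMstar]
      exact (RingHom.map_det f M').symm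
    have h1 : f m * f (adjugate M' i j) = f M'.det * f ((hkey' i j).choose) := by
      rw [← f.map_mul, ← f.map_mul]
      exact congrArg f (hPspec i j)
    rw [hadjMstar, hdetfd, Matrix.map_apply]
    field_simp
    linear_combination -h1
  · have hfm : ιΩ (f m) = f m := by rw [hcomp, hm]
    have e1 : Mstar * (f m • Mstar⁻¹) = f m • (1 : Matrix (Fin n) (Fin n) (FractionRing Λ)) := by
      rw [Matrix.mul_smul, Matrix.mul_nonsing_inv _ (isUnit_iff_ne_zero.mpr hdetMstar)]
    have h0 : (Mstar⁻¹).map ιΩ = (Mstar.map ιΩ)⁻¹ := by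
      refine (Matrix.inv_eq_right_inv ?_).symm
      rw [← Matrix.map_mul (f := ιΩ), Matrix.mul_nonsing_inv _ (isUnit_iff_ne_zero.mpr hdetMstar)]
      exact Matrix.map_one _ ιΩ.map_zero ιΩ.map_one
    have h2 : Mstar.map ιΩ = (M.map f)ᵀ := by
      ext i j
      show ιΩ (ιΩ (f (M j i))) = f (M j i)
      exact hιΩ _
    have h3 : (f m • Mstar⁻¹).map ιΩ = f m • (Mstar⁻¹).map ιΩ := by
      ext i j
      show ιΩ (f m * Mstar⁻¹ i j) = f m * ιΩ (Mstar⁻¹ i j)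
      rw [ιΩ.map_mul, hfm]
    have e2 : ((f m • Mstar⁻¹).map ιΩ)ᵀ * (M.map f) = f m • (1 : Matrix (Fin n) (Fin n) (FractionRing Λ)) := by
      rw [h3, Matrix.transpose_smul, h0, h2, Matrix.transpose_nonsing_inv,
        Matrix.transpose_transpose, Matrix.smul_mul,
        Matrix.nonsing_inv_mul _ (isUnit_iff_ne_zero.mpr hA)]
    have hS : S = Matrix.fromBlocks (M.map f) 0 0 (f m • Mstar⁻¹) := rfl
    rw [hS, Matrix.fromBlocks_map, Matrix.fromBlocks_transpose, Matrix.fromBlocks_multiply,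
      Matrix.fromBlocks_multiply]
    have z1 : ((0 : Matrix (Fin n) (Fin n) (FractionRing Λ)).map ιΩ) = 0 := by
      ext i j; exact ιΩ.map_zero
    rw [z1]
    simp only [Matrix.transpose_zero, Matrix.zero_mul, Matrix.mul_zero, Matrix.mul_one,
      Matrix.mul_neg, Matrix.mul_one, Matrix.one_mul, add_zero, zero_add, Matrix.neg_mul,
      Matrix.fromBlocks_smul, smul_zero]
    rw [e2]
    have e1' : ((M.map f).map ιΩ)ᵀ * (f m • Mstar⁻¹) = f m • (1 : Matrix (Fin n) (Fin n) (FractionRing Λ)) := e1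
    rw [e1']
    simp [Matrix.fromBlocks_smul]
end
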